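/- Let X be a connected quandle. Then the universal covering quandle X̂ = Ker(ε) with operation g◁h := e_a⁻¹ g h⁻¹ e_a h is also connected. -/

import Mathlib

/-- A quandle in the convention of the paper. -/
class PQuandle (X : Type*) where
  op : X → X → X
  op_self : ∀ a : X, op a a = a
  op_bij : ∀ a : X, Function.Bijective (fun x => op x a)
  op_distrib : ∀ a b c : X, op (op a b) c = op (op a c) (op b c)

infixl:65 " ◁ " => PQuandle.op

namespace PQuandle

variable {X : Type*} [PQuandle X]

/-- The `n`-fold right operation `x ◁ⁿ y`. -/
def opn (x : X) (n : ℕ) (y : X) : X := (fun z => z ◁ y)^[n] x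

/-- The right translation `(· ◁ y)` as a permutation of `X`. -/
noncomputable def act (y : X) : Equiv.Perm X := Equiv.ofBijective _ (op_bij y)

@[simp] lemma act_apply (y x : X) : act y x = x ◁ y := rfl

/-- The inner automorphism group `Inn(X)`. -/
noncomputable def Inn (X : Type*) [PQuandle X] : Subgroup (Equiv.Perm X) :=
  Subgroup.closure (Set.range (act (X := X)))

/-- The relators `e_{x ◁ y}⁻¹ e_y⁻¹ e_x e_y` of the adjoint group. -/
def adjRels (X : Type*) [PQuandle X] : Set (FreeGroup X) :=
  { r | ∃ x y : X,
      r = (FreeGroup.of (x ◁ y))⁻¹ * (FreeGroup.of y)⁻¹ * FreeGroup.of x * FreeGroup.of y }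

/-- The adjoint (enveloping) group `As(X)` of the quandle `X`. -/
def Adj (X : Type*) [PQuandle X] : Type _ := PresentedGroup (adjRels X)

instance : Group (Adj X) := by unfold Adj; infer_instance

/-- The generator `e_x` of `As(X)`. -/
def gen (x : X) : Adj X := PresentedGroup.of x

lemma gen_rel (x y : X) : gen (x ◁ y) = (gen y)⁻¹ * gen x * gen y := by
  have h : ((FreeGroup.of (x ◁ y))⁻¹ * (FreeGroup.of y)⁻¹ * FreeGroup.of x * FreeGroup.of y :
      FreeGroup X) ∈ Subgroup.normalClosure (adjRels X) :=
    Subgroup.subset_normalClosure ⟨x, y, rfl⟩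
  have h2 : ((gen (x ◁ y))⁻¹ * (gen y)⁻¹ * gen x * gen y : Adj X) = 1 := by
    have := (QuotientGroup.eq_one_iff
      (((FreeGroup.of (x ◁ y))⁻¹ * (FreeGroup.of y)⁻¹ * FreeGroup.of x * FreeGroup.of y :
        FreeGroup X))).mpr h
    exact this
  calc gen (x ◁ y)
      = gen (x ◁ y) * ((gen (x ◁ y))⁻¹ * (gen y)⁻¹ * gen x * gen y) := by rw [h2, mul_one]
    _ = (gen y)⁻¹ * gen x * gen y := by group

lemma act_mul_act (x y : X) : act y * act x = act (x ◁ y) * act y := by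
  ext z
  simp only [Equiv.Perm.mul_apply, act_apply]
  exact op_distrib z x y

/-- The homomorphism `As(X) → Perm(X)` sending `e_y` to the inverse of the right
translation by `y`; it encodes the right action of `As(X)` on `X`. -/
noncomputable def innHom : Adj X →* Equiv.Perm X :=
  PresentedGroup.toGroup (f := fun y : X => (act y)⁻¹) (by
    rintro r ⟨x, y, rfl⟩
    simp only [map_mul, map_inv, FreeGroup.lift_apply_of, inv_inv]
    have := act_mul_act x y
    calc act (x ◁ y) * act y * (act x)⁻¹ * (act y)⁻¹
        = (act y * act x) * (act x)⁻¹ * (act y)⁻¹ := by rw [this]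
      _ = 1 := by group)

@[simp] lemma innHom_gen (y : X) : innHom (gen y) = (act y)⁻¹ :=
  PresentedGroup.toGroup.of _

/-- The right action of `As(X)` on `X`: `x · g`. -/
noncomputable def ract (x : X) (g : Adj X) : X := (innHom g)⁻¹ x

@[simp] lemma ract_gen (x y : X) : ract x (gen y) = x ◁ y := by
  simp [ract]

lemma ract_mul (x : X) (g h : Adj X) : ract x (g * h) = ract (ract x g) h := by
  simp [ract, map_mul]

/-- A quandle is connected if the right action of `As(X)` on `X` is transitive. -/
def Connected (X : Type*) [PQuandle X] : Prop :=
  ∀ x y : X, ∃ g : Adj X, ract x g = y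

/-- The homomorphism `ε : As(X) → ℤ` sending every generator `e_x` to `1`. -/
def eps : Adj X →* Multiplicative ℤ :=
  PresentedGroup.toGroup (f := fun _ : X => Multiplicative.ofAdd 1) (by
    rintro r ⟨x, y, rfl⟩
    simp only [map_mul, map_inv, FreeGroup.lift_apply_of]
    group)

@[simp] lemma eps_gen (x : X) : eps (gen x) = Multiplicative.ofAdd 1 :=
  PresentedGroup.toGroup.of _

/-- The underlying set of the universal covering quandle: `Ker ε`. -/
def covOp (a : X) (g h : (eps (X := X)).ker) : (eps (X := X)).ker :=
  ⟨(gen a)⁻¹ * g.1 * (h.1)⁻¹ * gen a * h.1, by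
    have hg : eps g.1 = 1 := g.2
    have hh : eps h.1 = 1 := h.2
    simp only [MonoidHom.mem_ker, map_mul, map_inv, hg, hh]
    group⟩

/-- `n`-fold covering operation. -/
def covOpn (a : X) (g : (eps (X := X)).ker) (n : ℕ) (h : (eps (X := X)).ker) :
    (eps (X := X)).ker := (fun u => covOp a u h)^[n] g

/-- The right translation of the covering quandle as a permutation. -/
def covAct (a : X) (h : (eps (X := X)).ker) : Equiv.Perm (eps (X := X)).ker where
  toFun g := covOp a g h
  invFun g := ⟨gen a * g.1 * (h.1)⁻¹ * (gen a)⁻¹ * h.1, by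
    have hg : eps g.1 = 1 := g.2
    have hh : eps h.1 = 1 := h.2
    simp only [MonoidHom.mem_ker, map_mul, map_inv, hg, hh]
    group⟩
  left_inv g := by
    apply Subtype.ext
    simp only [covOp]
    group
  right_inv g := by
    apply Subtype.ext
    simp only [covOp]
    group

end PQuandle

section Aux
open PQuandle

variable {X : Type*} [PQuandle X]

lemma ract_one (x : X) : ract x (1 : Adj X) = x := by
  simp [ract, map_one]

lemma gen_ract (g : Adj X) : ∀ x : X, gen (ract x g) = g⁻¹ * gen x * g := by
  have hg : g ∈ Subgroup.closure (Set.range (gen : X → Adj X)) := by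
    have := PresentedGroup.closure_range_of (adjRels X)
    rw [show Subgroup.closure (Set.range (gen : X → Adj X)) = ⊤ from this]
    trivial
  induction hg using Subgroup.closure_induction with
  | mem y hy =>
    obtain ⟨y, rfl⟩ := hy
    intro x
    rw [ract_gen, gen_rel]
  | one => intro x; rw [ract_one]; group
  | mul u v hu hv pu pv =>
    intro x
    rw [ract_mul, pv, pu]
    group
  | inv u hu pu =>
    intro x
    have h1 : gen (ract (ract x u⁻¹) u) = u⁻¹ * gen (ract x u⁻¹) * u := pu _
    rw [← ract_mul, inv_mul_cancel, ract_one] at h1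
    rw [h1]; group

lemma ract_gen_zpow (a : X) (z : ℤ) : ract a ((gen a) ^ z) = a := by
  have hfix : Function.IsFixedPt (act a) a := by
    show act a a = a
    rw [act_apply, op_self]
  have : ract a ((gen a) ^ z) = ((act a) ^ z) a := by
    simp only [ract, map_zpow, innHom_gen]
    rw [← inv_zpow, inv_inv]
  rw [this]
  exact hfix.perm_zpow z

/-- Every generator is conjugate to `gen a` by an element of the kernel of `ε`. -/
lemma gen_conj (hconn : Connected X) (a x : X) :
    ∃ k : Adj X, eps k = 1 ∧ gen x = k⁻¹ * gen a * k := by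
  obtain ⟨g, hg⟩ := hconn a x
  set m : ℤ := Multiplicative.toAdd (eps g) with hm
  refine ⟨(gen a) ^ (-m) * g, ?_, ?_⟩
  · rw [map_mul, map_zpow, eps_gen]
    have : eps g = Multiplicative.ofAdd m := by rw [hm, ofAdd_toAdd]
    rw [this, ← ofAdd_zsmul]
    simp
  · have : ract a ((gen a) ^ (-m) * g) = x := by
      rw [ract_mul, ract_gen_zpow, hg]
    rw [← this, gen_ract]

/-- Key lemma: for any `u` in the adjoint group, there is an element of the closure of the
covering translations acting as `g ↦ (gen a)^(-ε u) * g * u`. -/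
lemma key (hconn : Connected X) (a : X) (u : Adj X) :
    ∃ f ∈ Subgroup.closure (Set.range (covAct a)),
      ∀ g : (eps (X := X)).ker,
        ((f g : (eps (X := X)).ker) : Adj X)
          = (gen a) ^ (-(Multiplicative.toAdd (eps u))) * (g : Adj X) * u := by
  have hu : u ∈ Subgroup.closure (Set.range (gen : X → Adj X)) := by
    have := PresentedGroup.closure_range_of (adjRels X)
    rw [show Subgroup.closure (Set.range (gen : X → Adj X)) = ⊤ from this]
    trivial
  induction hu using Subgroup.closure_induction with
  | mem y hy =>
    obtain ⟨x, rfl⟩ := hy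
    obtain ⟨k, hk1, hk2⟩ := gen_conj hconn a x
    refine ⟨covAct a ⟨k, hk1⟩, Subgroup.subset_closure ⟨⟨k, hk1⟩, rfl⟩, ?_⟩
    intro g
    show ((gen a)⁻¹ * (g : Adj X) * k⁻¹ * gen a * k : Adj X) = _
    rw [eps_gen, hk2]
    simp only [toAdd_ofAdd, zpow_neg, zpow_one]
    group
  | one =>
    refine ⟨1, one_mem _, fun g => ?_⟩
    simp
  | mul u v hu hv pu pv =>
    obtain ⟨fu, hfu, hfu2⟩ := pu
    obtain ⟨fv, hfv, hfv2⟩ := pv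
    refine ⟨fv * fu, mul_mem hfv hfu, fun g => ?_⟩
    have : (fv * fu) g = fv (fu g) := rfl
    rw [this, hfv2, hfu2, map_mul, toAdd_mul, neg_add, zpow_add]
    group
  | inv u hu pu =>
    obtain ⟨f, hf, hf2⟩ := pu
    set m : ℤ := Multiplicative.toAdd (eps u) with hm
    refine ⟨f⁻¹, inv_mem hf, fun g => ?_⟩
    have hmem : (gen a) ^ m * (g : Adj X) * u⁻¹ ∈ (eps (X := X)).ker := by
      have hg : eps (g : Adj X) = 1 := g.2
      have hu' : eps u = Multiplicative.ofAdd m := by rw [hm, ofAdd_toAdd]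
      simp only [MonoidHom.mem_ker, map_mul, map_inv, map_zpow, eps_gen, hg, hu',
        ← ofAdd_zsmul]
      simp
    have heq : f ⟨(gen a) ^ m * (g : Adj X) * u⁻¹, hmem⟩ = g := by
      apply Subtype.ext
      rw [hf2]
      simp only [← hm]
      group
    have : f⁻¹ g = ⟨(gen a) ^ m * (g : Adj X) * u⁻¹, hmem⟩ := by
      conv_lhs => rw [← heq]
      simp
    rw [this]
    simp only [map_inv, toAdd_inv, neg_neg, ← hm]

end Aux

open PQuandle in
/-- The universal covering quandle `X̂` of a connected quandle `X` is connected: the group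
generated by its right translations acts transitively. -/
theorem stmt16 (X : Type*) [PQuandle X] (hconn : Connected X) (a : X) :
    ∀ g h : (eps (X := X)).ker,
      ∃ f ∈ Subgroup.closure (Set.range (covAct a)), f g = h := by
  intro g h
  obtain ⟨f, hf, hf2⟩ := key hconn a ((g : Adj X)⁻¹ * (h : Adj X))
  refine ⟨f, hf, ?_⟩
  apply Subtype.ext
  rw [hf2]
  have hg : eps (g : Adj X) = 1 := g.2
  have hh : eps (h : Adj X) = 1 := h.2
  have : eps ((g : Adj X)⁻¹ * (h : Adj X)) = 1 := by rw [map_mul, map_inv, hg, hh]; group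
  rw [this]
  show (gen a) ^ (-(0:ℤ)) * (g : Adj X) * ((g : Adj X)⁻¹ * (h : Adj X)) = (h : Adj X)
  group
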